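/- The matrix e_2 is nilpotent of Jordan type λ: for every p ≥ 0 one has rank(e_2^p) = Σ_{r=1}^{k} max(λ_r − p, 0). In particular, the nilpotent orbit of e_2 corresponds to the partition λ, which covers the partition μ of e_1 in the dominance order. -/

import Mathlib

open Matrix

/-- The boxes of the right-aligned Young diagram of `μ` (0-based: box `⟨r, s⟩`
corresponds to the box in row `r+1`, `s+1`-th from the right end of its row). -/
abbrev Box (k : ℕ) (μ : Fin k → ℕ) := (r : Fin k) × Fin (μ r)

/-- The nilpotent `e₁` of Jordan type `μ`, sending `b_{r,s} ↦ b_{r,s+1}`. -/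
noncomputable def e1 (k : ℕ) (μ : Fin k → ℕ) : Matrix (Box k μ) (Box k μ) ℂ :=
  Matrix.of fun t u => if t.1 = u.1 ∧ t.2.val = u.2.val + 1 then 1 else 0

/-- The nilpotent `e₂ = e₁ + Σ_{s=1}^{μ_j} E_{(i,s),(j,s)}`. -/
noncomputable def e2 (k : ℕ) (μ : Fin k → ℕ) (i j : Fin k) : Matrix (Box k μ) (Box k μ) ℂ :=
  e1 k μ + Matrix.of fun t u => if t.1 = i ∧ u.1 = j ∧ t.2.val = u.2.val then 1 else 0

/-- `E_m := Σ_{r=i}^{j−m} Σ_{s=1}^{μ_{r+m}} E_{(r+m,s),(r,s)}`. -/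
noncomputable def Em (k : ℕ) (μ : Fin k → ℕ) (i j : Fin k) (m : ℕ) :
    Matrix (Box k μ) (Box k μ) ℂ :=
  Matrix.of fun t u =>
    if i ≤ u.1 ∧ t.1 ≤ j ∧ t.1.val = u.1.val + m ∧ t.2.val = u.2.val then 1 else 0

/-- `m₁ := span{E_{t,u} : s_t < s_u}`. -/
noncomputable def m1 (k : ℕ) (μ : Fin k → ℕ) : Submodule ℂ (Matrix (Box k μ) (Box k μ) ℂ) :=
  Submodule.span ℂ
    {x | ∃ t u : Box k μ, t.2.val < u.2.val ∧ x = Matrix.single t u 1}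

/-- `k := span{E_1, …, E_{j−i}}`. -/
noncomputable def fk (k : ℕ) (μ : Fin k → ℕ) (i j : Fin k) :
    Submodule ℂ (Matrix (Box k μ) (Box k μ) ℂ) :=
  Submodule.span ℂ {x | ∃ m : ℕ, 1 ≤ m ∧ m ≤ j.val - i.val ∧ x = Em k μ i j m}

/-- `m₂ := m₁ + k`. -/
noncomputable def m2 (k : ℕ) (μ : Fin k → ℕ) (i j : Fin k) :
    Submodule ℂ (Matrix (Box k μ) (Box k μ) ℂ) :=
  m1 k μ ⊔ fk k μ i j

/-- The covering partition `λ`. -/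
def lam (k : ℕ) (μ : Fin k → ℕ) (i j : Fin k) : Fin k → ℕ :=
  fun r => if r = i then μ i + 1 else if r = j then μ j - 1 else μ r

/-- `χ_a(x) = Tr(e_a x)`. -/
noncomputable def chi (k : ℕ) (μ : Fin k → ℕ) (ea x : Matrix (Box k μ) (Box k μ) ℂ) : ℂ :=
  (ea * x).trace


set_option linter.unusedSectionVars false
set_option linter.unreachableTactic false
set_option linter.unusedTactic false
set_option linter.unusedVariables false
set_option linter.unnecessarySeqFocus false


section Pmat

variable {α : Type*} [Fintype α] [DecidableEq α]

noncomputable def pmat (f : α → Option α) : Matrix α α ℂ :=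
  Matrix.of fun t u => if f u = some t then 1 else 0

def iterOpt (f : α → Option α) : ℕ → α → Option α
  | 0, u => some u
  | (p+1), u => (f u).bind (iterOpt f p)

lemma pmat_mul (f g : α → Option α) :
    pmat g * pmat f = pmat (fun u => (f u).bind g) := by
  ext t u
  rw [Matrix.mul_apply]
  rcases h : f u with _ | w
  · simp [pmat, h]
  · simp only [pmat, Matrix.of_apply, h, Option.bind_some]
    rw [Finset.sum_eq_single w]
    · simp
    · intro v _ hv
      simp [Ne.symm hv]
    · simp

lemma pmat_one : (pmat (fun u : α => some u)) = 1 := by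
  ext t u
  simp [pmat, Matrix.one_apply, eq_comm]

lemma pmat_pow (f : α → Option α) (p : ℕ) : (pmat f) ^ p = pmat (iterOpt f p) := by
  induction p with
  | zero => simp [iterOpt, pmat_one]
  | succ p ih =>
      rw [pow_succ, ih, pmat_mul]
      rfl

lemma iterOpt_inj (f : α → Option α) (hf : ∀ a b t, f a = some t → f b = some t → a = b)
    (p : ℕ) : ∀ a b t, iterOpt f p a = some t → iterOpt f p b = some t → a = b := by
  induction p with
  | zero => intro a b t ha hb; simp [iterOpt] at ha hb; rw [ha, hb]
  | succ p ih =>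
      intro a b t ha hb
      simp only [iterOpt] at ha hb
      rcases hfa : f a with _ | va
      · rw [hfa] at ha; simp at ha
      rcases hfb : f b with _ | vb
      · rw [hfb] at hb; simp at hb
      rw [hfa] at ha; rw [hfb] at hb
      simp only [Option.bind_some] at ha hb
      exact hf a b _ hfa (by rw [hfb, ih va vb t ha hb])

lemma rank_pmat (f : α → Option α) (hf : ∀ a b t, f a = some t → f b = some t → a = b) :
    (pmat f).rank = Fintype.card {u : α // (f u).isSome} := by
  classical
  rw [Matrix.rank, Matrix.range_mulVecLin]
  have hcols : (pmat f)ᵀ =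
      (fun u : α => if h : (f u).isSome then Pi.single ((f u).get h) (1:ℂ) else 0) := by
    funext u
    rcases h : f u with _ | v
    · funext t; simp [pmat, h]
    · funext t
      simp [pmat, h, Pi.single_apply, eq_comm]
  rw [Matrix.col, hcols]
  set g : {u : α // (f u).isSome} → (α → ℂ) :=
      fun u => Pi.single ((f u.1).get u.2) 1 with hg
  have hspan : Submodule.span ℂ (Set.range
      (fun u : α => if h : (f u).isSome then Pi.single ((f u).get h) (1:ℂ) else 0)) =
      Submodule.span ℂ (Set.range g) := by
    apply le_antisymm <;> rw [Submodule.span_le]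
    · rintro _ ⟨u, rfl⟩
      dsimp only
      by_cases h : (f u).isSome
      · rw [dif_pos h]
        exact Submodule.subset_span ⟨⟨u, h⟩, rfl⟩
      · rw [dif_neg h]; exact (Submodule.span ℂ _).zero_mem
    · rintro _ ⟨⟨u, h⟩, rfl⟩
      apply Submodule.subset_span
      exact ⟨u, by simp [hg, h]⟩
  rw [hspan]
  have hinj : Function.Injective g := by
    rintro ⟨a, ha⟩ ⟨b, hb⟩ hab
    have h1 : ((f a).get ha) = ((f b).get hb) := by
      by_contra hne
      have := congrFun hab ((f a).get ha)
      simp [hg, Pi.single_apply, hne] at this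
    have := hf a b _ (Option.eq_some_of_isSome ha) (by
      rw [Option.eq_some_of_isSome hb, h1])
    exact Subtype.ext this
  have hli : LinearIndependent ℂ g := by
    have := (Pi.basisFun ℂ α).linearIndependent
    have h2 : g = (Pi.basisFun ℂ α) ∘ (fun u : {u : α // (f u).isSome} => (f u.1).get u.2) := by
      funext u; simp [hg]
    rw [h2]
    exact this.comp _ (fun a b hab => hinj (by simp [hg, hab]))
  exact finrank_span_eq_card hli

end Pmat

section BoxStuff
variable (k : ℕ) (μ : Fin k → ℕ) (i j : Fin k)

lemma box_ext_iff {a r : Fin k} {b : Fin (μ a)} {s : Fin (μ r)} :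
    (⟨a, b⟩ : Box k μ) = ⟨r, s⟩ ↔ a = r ∧ (b : ℕ) = (s : ℕ) := by
  constructor
  · rintro h
    cases h
    exact ⟨rfl, rfl⟩
  · rintro ⟨rfl, h⟩
    exact congrArg _ (Fin.ext h)

/-- `bx r s` : the standard basis vector at box `(r,s)`, or `0` if out of range. -/
noncomputable def bx (r : Fin k) (s : ℕ) : Box k μ → ℂ :=
  if h : s < μ r then Pi.single (⟨r, ⟨s, h⟩⟩ : Box k μ) 1 else 0

lemma bx_apply (r : Fin k) (s : ℕ) (a : Fin k) (b : Fin (μ a)) :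
    bx k μ r s ⟨a, b⟩ = if a = r ∧ (b : ℕ) = s then 1 else 0 := by
  unfold bx
  by_cases h : s < μ r
  · rw [dif_pos h, Pi.single_apply]
    congr 1
    rw [box_ext_iff]
  · rw [dif_neg h]
    have : ¬ (a = r ∧ (b : ℕ) = s) := by
      rintro ⟨rfl, hb⟩
      exact h (hb ▸ b.2)
    rw [if_neg this]
    rfl

lemma bx_zero {r : Fin k} {s : ℕ} (h : ¬ s < μ r) : bx k μ r s = 0 := dif_neg h

lemma bx_single {r : Fin k} {s : ℕ} (h : s < μ r) :
    bx k μ r s = Pi.single (⟨r, ⟨s, h⟩⟩ : Box k μ) 1 := dif_pos h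

/-- The action of `e2` on basis vectors. -/
lemma e2_mulVec_bx (r : Fin k) (s : ℕ) :
    e2 k μ i j *ᵥ bx k μ r s =
      if s < μ r then bx k μ r (s+1) + (if r = j then bx k μ i s else 0) else 0 := by
  by_cases h : s < μ r
  · rw [if_pos h, bx_single k μ h, Matrix.mulVec_single]
    funext t
    rcases t with ⟨a, b⟩
    simp only [e2, e1, Matrix.add_apply, Matrix.of_apply, mul_one, Pi.add_apply,
      ite_apply, Pi.zero_apply, bx_apply]
    split_ifs <;> simp_all <;> grind
  · rw [if_neg h, bx_zero k μ h, Matrix.mulVec_zero]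

end BoxStuff

section Conj
variable (k : ℕ) (μ : Fin k → ℕ) (i j : Fin k)

noncomputable def cc (r : Fin k) (s : ℕ) : Box k μ → ℂ :=
  if r = j then bx k μ j s + (s : ℂ) • bx k μ i (s - 1)
  else if r = i then
    (if s + 2 ≤ μ j then ((μ j - 1 - s : ℕ) : ℂ) • bx k μ i s - bx k μ j (s + 1)
     else ((μ j : ℕ) : ℂ) • bx k μ i s)
  else bx k μ r s

noncomputable def qq (r : Fin k) (s : ℕ) : Box k μ → ℂ :=
  if r = j then (((μ j - s : ℕ) : ℂ) / ((μ j : ℕ) : ℂ)) • bx k μ j s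
      - ((s : ℂ) / ((μ j : ℕ) : ℂ)) • bx k μ i (s - 1)
  else if r = i then
    (if s + 2 ≤ μ j then (((μ j : ℕ) : ℂ))⁻¹ • (bx k μ i s + bx k μ j (s + 1))
     else (((μ j : ℕ) : ℂ))⁻¹ • bx k μ i s)
  else bx k μ r s

noncomputable def Pm : Matrix (Box k μ) (Box k μ) ℂ :=
  Matrix.of fun t u => cc k μ i j u.1 u.2 t

noncomputable def Qm : Matrix (Box k μ) (Box k μ) ℂ :=
  Matrix.of fun t u => qq k μ i j u.1 u.2 t

def bsucc : Box k μ → Option (Box k μ) := fun u =>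
  if h1 : u.1 = j ∧ (u.2 : ℕ) + 1 = μ j ∧ (u.2 : ℕ) < μ i then some ⟨i, ⟨u.2, h1.2.2⟩⟩
  else if u.1 = i ∧ (u.2 : ℕ) + 2 = μ j then none
  else if h3 : (u.2 : ℕ) + 1 < μ u.1 then some ⟨u.1, ⟨(u.2 : ℕ) + 1, h3⟩⟩
  else none

def Lf : Box k μ → ℕ := fun u =>
  if u.1 = j then μ i - u.2
  else if u.1 = i then (if (u.2 : ℕ) + 2 ≤ μ j then μ j - 2 - u.2 else μ i - 1 - u.2)
  else μ u.1 - 1 - u.2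

lemma P_mulVec_bx (r : Fin k) (s : ℕ) :
    Pm k μ i j *ᵥ bx k μ r s = if s < μ r then cc k μ i j r s else 0 := by
  by_cases h : s < μ r
  · rw [if_pos h, bx_single k μ h, Matrix.mulVec_single]
    funext t
    simp [Pm]
  · rw [if_neg h, bx_zero k μ h, Matrix.mulVec_zero]

lemma single_eq_bx (v : Box k μ) : Pi.single v (1 : ℂ) = bx k μ v.1 v.2 := by
  rcases v with ⟨a, b⟩
  rw [bx_single k μ b.2]

lemma pmat_col {α : Type*} [Fintype α] [DecidableEq α] (f : α → Option α) (u : α) :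
    (fun t => pmat f t u) = (f u).elim 0 (fun v => Pi.single v (1 : ℂ)) := by
  rcases h : f u with _ | v <;> funext t <;> simp [pmat, h, Pi.single_apply, eq_comm]

lemma mul_col {α : Type*} [Fintype α] [DecidableEq α] (A B : Matrix α α ℂ) (u : α) :
    (fun t => (A * B) t u) = A *ᵥ (fun v => B v u) := by
  funext t
  simp [Matrix.mul_apply, Matrix.mulVec, dotProduct]

end Conj

section Conj2
variable (k : ℕ) (μ : Fin k → ℕ) (i j : Fin k)

lemma cast_sub' {a b : ℕ} (h : b ≤ a) : ((a - b : ℕ) : ℂ) = (a : ℂ) - (b : ℂ) :=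
  Nat.cast_sub h

lemma P_mulVec_qq (hij : i ≠ j) (hji : μ j ≤ μ i) (hpj : 0 < μ j)
    (r : Fin k) (s : ℕ) (hs : s < μ r) :
    Pm k μ i j *ᵥ qq k μ i j r s = bx k μ r s := by
  have hμj : ((μ j : ℕ) : ℂ) ≠ 0 := Nat.cast_ne_zero.mpr hpj.ne'
  by_cases hrj : r = j
  · rw [hrj] at hs ⊢
    rw [qq, if_pos rfl, Matrix.mulVec_sub, Matrix.mulVec_smul, Matrix.mulVec_smul,
      P_mulVec_bx, P_mulVec_bx, if_pos hs, if_pos (show s - 1 < μ i by omega)]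
    rcases s with _ | s'
    · rw [cc, if_pos rfl]
      simp
      match_scalars <;> field_simp
    · have h1 : s' + 1 - 1 = s' := by omega
      rw [h1, cc, if_pos rfl, h1, cc, if_neg hij, if_pos rfl,
        if_pos (show s' + 2 ≤ μ j by omega)]
      rw [cast_sub' (show s' + 1 ≤ μ j by omega),
        (show μ j - 1 - s' = μ j - (1 + s') by omega),
        cast_sub' (show 1 + s' ≤ μ j by omega)]
      push_cast
      match_scalars <;> field_simp <;> ring
  · by_cases hri : r = i
    · rw [hri] at hs ⊢
      rw [qq, if_neg hij, if_pos rfl]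
      by_cases h2 : s + 2 ≤ μ j
      · rw [if_pos h2, Matrix.mulVec_smul, Matrix.mulVec_add, P_mulVec_bx, P_mulVec_bx,
          if_pos hs, if_pos (show s + 1 < μ j by omega)]
        rw [cc, if_neg hij, if_pos rfl, if_pos h2, cc, if_pos rfl,
          (show s + 1 - 1 = s by omega)]
        rw [(show μ j - 1 - s = μ j - (1 + s) by omega),
          cast_sub' (show 1 + s ≤ μ j by omega)]
        push_cast
        match_scalars <;> field_simp <;> ring
      · rw [if_neg h2, Matrix.mulVec_smul, P_mulVec_bx, if_pos hs,
          cc, if_neg hij, if_pos rfl, if_neg h2]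
        rw [smul_smul, inv_mul_cancel₀ hμj, one_smul]
    · rw [qq, if_neg hrj, if_neg hri, P_mulVec_bx, if_pos hs, cc, if_neg hrj, if_neg hri]

end Conj2

section Conj3
variable (k : ℕ) (μ : Fin k → ℕ) (i j : Fin k)

lemma bsucc_eq (r : Fin k) (s : ℕ) (hs : s < μ r) :
    bsucc k μ i j ⟨r, ⟨s, hs⟩⟩ =
      if h1 : r = j ∧ s + 1 = μ j ∧ s < μ i then some ⟨i, ⟨s, h1.2.2⟩⟩
      else if r = i ∧ s + 2 = μ j then none
      else if h3 : s + 1 < μ r then some ⟨r, ⟨s + 1, h3⟩⟩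
      else none := rfl

lemma e2_mulVec_cc (hij : i ≠ j) (hji : μ j ≤ μ i) (r : Fin k) (s : ℕ) (hs : s < μ r) :
    e2 k μ i j *ᵥ cc k μ i j r s =
      (bsucc k μ i j ⟨r, ⟨s, hs⟩⟩).elim 0 (fun v => cc k μ i j v.1 v.2) := by
  rw [bsucc_eq]
  by_cases hrj : r = j
  · rw [hrj] at hs ⊢
    rw [cc, if_pos rfl, Matrix.mulVec_add, Matrix.mulVec_smul, e2_mulVec_bx, e2_mulVec_bx,
      if_pos hs, if_pos rfl, if_pos (show s - 1 < μ i by omega), if_neg hij]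
    by_cases hs1 : s + 1 = μ j
    · rw [dif_pos ⟨rfl, hs1, by omega⟩]
      simp only [Option.elim]
      rw [cc, if_neg hij, if_pos rfl, if_neg (by omega)]
      rw [bx_zero k μ (show ¬ s + 1 < μ j by omega)]
      rcases s with _ | s'
      · have : μ j = 1 := by omega
        simp [this]
      · rw [(show s' + 1 - 1 + 1 = s' + 1 by omega)]
        have : ((μ j : ℕ) : ℂ) = ((s' + 1 : ℕ) : ℂ) + 1 := by
          rw [← hs1]; push_cast; ring
        rw [this]
        match_scalars <;> push_cast <;> ring
    · rw [dif_neg (by rintro ⟨-, h, -⟩; exact hs1 h),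
        if_neg (by rintro ⟨h, -⟩; exact hij h.symm),
        dif_pos (show s + 1 < μ j by omega)]
      simp only [Option.elim]
      rw [cc, if_pos rfl, (show s + 1 - 1 = s by omega)]
      rcases s with _ | s'
      · simp
      · rw [(show s' + 1 - 1 + 1 = s' + 1 by omega)]
        match_scalars <;> push_cast <;> ring
  · by_cases hri : r = i
    · rw [hri] at hs ⊢
      rw [cc, if_neg hij, if_pos rfl]
      by_cases h2 : s + 2 ≤ μ j
      · rw [if_pos h2, Matrix.mulVec_sub, Matrix.mulVec_smul, e2_mulVec_bx, e2_mulVec_bx,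
          if_pos (show s < μ i by omega), if_neg hij, if_pos (show s + 1 < μ j by omega),
          if_pos rfl]
        by_cases h3 : s + 2 = μ j
        · rw [dif_neg (by rintro ⟨h, -⟩; exact hij h), if_pos ⟨rfl, h3⟩]
          simp only [Option.elim]
          rw [bx_zero k μ (show ¬ s + 2 < μ j by omega),
            (show μ j - 1 - s = 1 by omega)]
          simp
        · rw [dif_neg (by rintro ⟨h, -⟩; exact hij h), if_neg (by rintro ⟨-, h⟩; exact h3 h),
            dif_pos (show s + 1 < μ i by omega)]
          simp only [Option.elim]
          rw [cc, if_neg hij, if_pos rfl, if_pos (show s + 1 + 2 ≤ μ j by omega)]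
          rw [(show μ j - 1 - s = μ j - (1 + s) by omega), cast_sub' (show 1 + s ≤ μ j by omega),
            (show μ j - 1 - (s + 1) = μ j - (2 + s) by omega),
            cast_sub' (show 2 + s ≤ μ j by omega)]
          match_scalars <;> push_cast <;> ring
      · rw [if_neg h2, Matrix.mulVec_smul, e2_mulVec_bx, if_pos hs, if_neg hij]
        rw [dif_neg (by rintro ⟨h, -⟩; exact hij h), if_neg (by rintro ⟨-, h⟩; omega)]
        by_cases h4 : s + 1 < μ i
        · rw [dif_pos h4]
          simp only [Option.elim]
          rw [cc, if_neg hij, if_pos rfl, if_neg (by omega)]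
          simp
        · rw [dif_neg h4]
          simp only [Option.elim]
          rw [bx_zero k μ (by omega)]
          simp
    · rw [cc, if_neg hrj, if_neg hri, e2_mulVec_bx, if_pos hs, if_neg hrj]
      rw [dif_neg (by rintro ⟨h, -⟩; exact hrj h), if_neg (by rintro ⟨h, -⟩; exact hri h)]
      by_cases h4 : s + 1 < μ r
      · rw [dif_pos h4]
        simp only [Option.elim]
        rw [cc, if_neg hrj, if_neg hri]
        simp
      · rw [dif_neg h4]
        simp only [Option.elim]
        rw [bx_zero k μ (by omega)]
        simp

end Conj3

section Conj4
variable (k : ℕ) (μ : Fin k → ℕ) (i j : Fin k)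

lemma PQ_one (hij : i ≠ j) (hji : μ j ≤ μ i) (hpj : 0 < μ j) :
    Pm k μ i j * Qm k μ i j = 1 := by
  ext t u
  rcases u with ⟨r, s⟩
  have h1 : (Pm k μ i j * Qm k μ i j) t ⟨r, s⟩ =
      (Pm k μ i j *ᵥ qq k μ i j r (s : ℕ)) t := by
    exact congrFun (mul_col _ _ _) t
  rw [h1, P_mulVec_qq k μ i j hij hji hpj r (s : ℕ) s.2]
  rcases t with ⟨a, b⟩
  rw [bx_apply, Matrix.one_apply]
  congr 1
  rw [box_ext_iff]

lemma e2P_PN (hij : i ≠ j) (hji : μ j ≤ μ i) :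
    e2 k μ i j * Pm k μ i j = Pm k μ i j * pmat (bsucc k μ i j) := by
  ext t u
  rcases u with ⟨r, s⟩
  have h1 : (e2 k μ i j * Pm k μ i j) t ⟨r, s⟩ =
      (e2 k μ i j *ᵥ cc k μ i j r (s : ℕ)) t := congrFun (mul_col _ _ _) t
  have h2 : (Pm k μ i j * pmat (bsucc k μ i j)) t ⟨r, s⟩ =
      (Pm k μ i j *ᵥ (fun v => pmat (bsucc k μ i j) v ⟨r, s⟩)) t := congrFun (mul_col _ _ _) t
  rw [h1, h2, pmat_col, e2_mulVec_cc k μ i j hij hji r (s : ℕ) s.2]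
  have : (⟨r, ⟨(s : ℕ), s.2⟩⟩ : Box k μ) = ⟨r, s⟩ := rfl
  rw [this]
  rcases h : bsucc k μ i j ⟨r, s⟩ with _ | v
  · simp
  · simp only [Option.elim]
    rw [single_eq_bx, P_mulVec_bx, if_pos v.2.2]

lemma bsucc_some_cases (u t : Box k μ) (h : bsucc k μ i j u = some t) :
    (u.1 = t.1 ∧ (t.2 : ℕ) = (u.2 : ℕ) + 1 ∧ ¬(u.1 = i ∧ (u.2 : ℕ) + 2 = μ j)) ∨
    (u.1 = j ∧ t.1 = i ∧ (t.2 : ℕ) = (u.2 : ℕ) ∧ (u.2 : ℕ) + 1 = μ j) := by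
  rcases u with ⟨r, s⟩
  rcases t with ⟨rt, st⟩
  simp only [bsucc] at h
  split_ifs at h with h1 h2 h3
  · rw [Option.some_inj, box_ext_iff] at h
    exact Or.inr ⟨h1.1, h.1.symm, h.2.symm, h1.2.1⟩
  · rw [Option.some_inj, box_ext_iff] at h
    exact Or.inl ⟨h.1, h.2.symm, h2⟩

lemma bsucc_inj (hij : i ≠ j) :
    ∀ a b t, bsucc k μ i j a = some t → bsucc k μ i j b = some t → a = b := by
  intro a b t ha hb
  obtain ⟨ra, sa⟩ := a
  obtain ⟨rb, sb⟩ := b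
  have Ha := bsucc_some_cases k μ i j ⟨ra, sa⟩ t ha
  have Hb := bsucc_some_cases k μ i j ⟨rb, sb⟩ t hb
  dsimp only at Ha Hb
  rcases Ha with ⟨ha1, ha2, ha3⟩ | ⟨ha1, ha2, ha3, ha4⟩ <;>
    rcases Hb with ⟨hb1, hb2, hb3⟩ | ⟨hb1, hb2, hb3, hb4⟩
  · exact (box_ext_iff k μ).mpr ⟨ha1.trans hb1.symm, by omega⟩
  · exact absurd ⟨ha1.trans hb2, by omega⟩ ha3
  · exact absurd ⟨hb1.trans ha2, by omega⟩ hb3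
  · exact (box_ext_iff k μ).mpr ⟨ha1.trans hb1.symm, by omega⟩

lemma bsucc_none_L (hij : i ≠ j) (hji : μ j ≤ μ i) (u : Box k μ)
    (h : bsucc k μ i j u = none) : Lf k μ i j u = 0 := by
  rcases u with ⟨r, s⟩
  have hs := s.2
  simp only [bsucc] at h
  simp only [Lf]
  split_ifs at h with h1 h2 h3
  · have h2' := h2.2
    rw [if_neg (by rw [h2.1]; exact hij), if_pos h2.1, if_pos (by omega)]
    omega
  · by_cases hrj : r = j
    · have hμ : μ r = μ j := by rw [hrj]
      exact absurd ⟨hrj, by omega, by omega⟩ h1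
    · rw [if_neg hrj]
      by_cases hri : r = i
      · have hμ : μ r = μ i := by rw [hri]
        have h2' : ¬ (s : ℕ) + 2 = μ j := fun hc => h2 ⟨hri, hc⟩
        rw [if_pos hri, if_neg (by omega)]
        omega
      · rw [if_neg hri]
        omega

lemma bsucc_some_L (hij : i ≠ j) (hji : μ j ≤ μ i) (u t : Box k μ)
    (h : bsucc k μ i j u = some t) : Lf k μ i j u = Lf k μ i j t + 1 := by
  obtain ⟨r, s⟩ := u
  obtain ⟨rt, st⟩ := t
  have hs := s.2
  have hst := st.2
  have H := bsucc_some_cases k μ i j ⟨r, s⟩ ⟨rt, st⟩ h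
  dsimp only at H
  simp only [Lf]
  rcases H with ⟨h1, h2, h3⟩ | ⟨h1, h2, h3, h4⟩
  · by_cases hrj : r = j
    · have hμ : μ r = μ j := by rw [hrj]
      rw [if_pos hrj, if_pos (h1.symm.trans hrj)]
      omega
    · by_cases hri : r = i
      · have hμ : μ r = μ i := by rw [hri]
        have hμt : μ rt = μ i := by rw [← h1, hri]
        have h3' : ¬ (s : ℕ) + 2 = μ j := fun hc => h3 ⟨hri, hc⟩
        rw [if_neg hrj, if_neg (fun hc => hrj (h1.trans hc)),
          if_pos hri, if_pos (h1.symm.trans hri)]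
        split_ifs <;> omega
      · have hμ : μ r = μ rt := by rw [h1]
        rw [if_neg hrj, if_neg (fun hc => hrj (h1.trans hc)),
          if_neg hri, if_neg (fun hc => hri (h1.trans hc))]
        omega
  · have hμ : μ r = μ j := by rw [h1]
    have hμt : μ rt = μ i := by rw [h2]
    rw [if_pos h1, if_neg (fun hc => hij (h2.symm.trans hc)), if_pos h2, if_neg (by omega)]
    omega

lemma isSome_iter (hij : i ≠ j) (hji : μ j ≤ μ i) (p : ℕ) (u : Box k μ) :
    (iterOpt (bsucc k μ i j) p u).isSome ↔ p ≤ Lf k μ i j u := by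
  induction p generalizing u with
  | zero => simp [iterOpt]
  | succ p ih =>
      simp only [iterOpt]
      rcases h : bsucc k μ i j u with _ | v
      · simp [bsucc_none_L k μ i j hij hji u h]
      · simp only [Option.bind_some, ih]
        rw [bsucc_some_L k μ i j hij hji u v h]
        omega

end Conj4

lemma sum_range_ite (n a b : ℕ) :
    (∑ s ∈ Finset.range n, if a ≤ s ∧ s < b then (1 : ℕ) else 0) = min n b - a := by
  induction n with
  | zero => simp
  | succ n ih =>
      rw [Finset.sum_range_succ, ih]
      split_ifs <;> omega

lemma sum_split (k : ℕ) (i j : Fin k) (hne : i ≠ j) (f g : Fin k → ℕ)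
    (hfg : ∀ r, r ≠ i → r ≠ j → f r = g r) (hijv : f i + f j = g i + g j) :
    ∑ r : Fin k, f r = ∑ r : Fin k, g r := by
  have hj : j ∈ (Finset.univ : Finset (Fin k)).erase i := by
    simp [Finset.mem_erase, hne.symm]
  have hrest : ∑ r ∈ ((Finset.univ : Finset (Fin k)).erase i).erase j, f r =
      ∑ r ∈ ((Finset.univ : Finset (Fin k)).erase i).erase j, g r := by
    apply Finset.sum_congr rfl
    intro r hr
    simp only [Finset.mem_erase] at hr
    exact hfg r hr.2.1 hr.1
  have h1 : ∑ r : Fin k, f r = f i + (f j + ∑ r ∈ ((Finset.univ : Finset (Fin k)).erase i).erase j, f r) := by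
    rw [Finset.add_sum_erase _ f hj, Finset.add_sum_erase _ f (Finset.mem_univ i)]
  have h2 : ∑ r : Fin k, g r = g i + (g j + ∑ r ∈ ((Finset.univ : Finset (Fin k)).erase i).erase j, g r) := by
    rw [Finset.add_sum_erase _ g hj, Finset.add_sum_erase _ g (Finset.mem_univ i)]
  rw [h1, h2, hrest]
  omega

section Final
variable (k : ℕ) (μ : Fin k → ℕ) (i j : Fin k)

lemma e2_conj (hij : i ≠ j) (hji : μ j ≤ μ i) (hpj : 0 < μ j) (p : ℕ) :
    (e2 k μ i j) ^ p = Pm k μ i j * (pmat (bsucc k μ i j)) ^ p * Qm k μ i j := by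
  have hPQ := PQ_one k μ i j hij hji hpj
  have hQP : Qm k μ i j * Pm k μ i j = 1 := mul_eq_one_comm.mp hPQ
  have he2 : e2 k μ i j = Pm k μ i j * pmat (bsucc k μ i j) * Qm k μ i j := by
    calc e2 k μ i j = e2 k μ i j * (Pm k μ i j * Qm k μ i j) := by rw [hPQ, mul_one]
    _ = (e2 k μ i j * Pm k μ i j) * Qm k μ i j := by rw [mul_assoc]
    _ = Pm k μ i j * pmat (bsucc k μ i j) * Qm k μ i j := by
        rw [e2P_PN k μ i j hij hji]
  induction p with
  | zero => rw [pow_zero, pow_zero, mul_one, hPQ]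
  | succ p ih =>
      rw [pow_succ, ih, he2, pow_succ]
      simp only [mul_assoc]
      congr 1
      congr 1
      rw [← mul_assoc (Qm k μ i j), hQP, one_mul]

lemma rank_e2_pow (hij : i ≠ j) (hji : μ j ≤ μ i) (hpj : 0 < μ j) (p : ℕ) :
    ((e2 k μ i j) ^ p).rank = Fintype.card {u : Box k μ // p ≤ Lf k μ i j u} := by
  have hPQ := PQ_one k μ i j hij hji hpj
  have hdet : (Pm k μ i j).det * (Qm k μ i j).det = 1 := by
    rw [← Matrix.det_mul, hPQ, Matrix.det_one]
  have hdP : IsUnit (Pm k μ i j).det := IsUnit.of_mul_eq_one _ hdet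
  have hdQ : IsUnit (Qm k μ i j).det := IsUnit.of_mul_eq_one _ (by rw [mul_comm] at hdet; exact hdet)
  rw [e2_conj k μ i j hij hji hpj p, mul_assoc,
    Matrix.rank_mul_eq_right_of_isUnit_det _ _ hdP,
    Matrix.rank_mul_eq_left_of_isUnit_det _ _ hdQ,
    pmat_pow, rank_pmat _ (iterOpt_inj _ (bsucc_inj k μ i j hij) p)]
  exact Fintype.card_congr (Equiv.subtypeEquivRight (fun u => by
    rw [isSome_iter k μ i j hij hji p u]))

lemma count_L (hij : i ≠ j) (hji : μ j ≤ μ i) (hpj : 0 < μ j) (p : ℕ) :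
    Fintype.card {u : Box k μ // p ≤ Lf k μ i j u} = ∑ r : Fin k, (lam k μ i j r - p) := by
  rw [Fintype.card_subtype, Finset.card_filter, ← Finset.univ_sigma_univ, Finset.sum_sigma]
  have hrow : ∀ r : Fin k, (∑ s : Fin (μ r), if p ≤ Lf k μ i j ⟨r, s⟩ then (1:ℕ) else 0) =
      ∑ s ∈ Finset.range (μ r),
        (fun s : ℕ => if p ≤ (if r = j then μ i - s else if r = i then
            (if s + 2 ≤ μ j then μ j - 2 - s else μ i - 1 - s) else μ r - 1 - s)
          then (1:ℕ) else 0) s := by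
    intro r
    exact Fin.sum_univ_eq_sum_range (fun s : ℕ => if p ≤ (if r = j then μ i - s
      else if r = i then (if s + 2 ≤ μ j then μ j - 2 - s else μ i - 1 - s)
      else μ r - 1 - s) then (1:ℕ) else 0) (μ r)
  apply sum_split k i j hij _ _
  · intro r hri hrj
    rw [hrow r]
    have : ∑ s ∈ Finset.range (μ r),
        (if p ≤ (if r = j then μ i - s else if r = i then
            (if s + 2 ≤ μ j then μ j - 2 - s else μ i - 1 - s) else μ r - 1 - s)
          then (1:ℕ) else 0) =
        ∑ s ∈ Finset.range (μ r), (if 0 ≤ s ∧ s < μ r - p then (1:ℕ) else 0) := by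
      apply Finset.sum_congr rfl
      intro s hs
      rw [Finset.mem_range] at hs
      rw [if_neg hrj, if_neg hri]
      exact if_congr (by omega) rfl rfl
    rw [this, sum_range_ite]
    have : lam k μ i j r = μ r := by
      rw [lam, if_neg hri, if_neg hrj]
    rw [this]
    omega
  · -- f i + f j = g i + g j
    have hfi : (∑ s : Fin (μ i), if p ≤ Lf k μ i j ⟨i, s⟩ then (1:ℕ) else 0) =
        (μ j - 1 - p) + ((μ i - p) - (μ j - 1)) := by
      rw [hrow i]
      have : ∑ s ∈ Finset.range (μ i),
          (if p ≤ (if i = j then μ i - s else if i = i then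
              (if s + 2 ≤ μ j then μ j - 2 - s else μ i - 1 - s) else μ i - 1 - s)
            then (1:ℕ) else 0) =
          ∑ s ∈ Finset.range (μ i),
            ((if 0 ≤ s ∧ s < μ j - 1 - p then (1:ℕ) else 0) +
             (if μ j - 1 ≤ s ∧ s < μ i - p then (1:ℕ) else 0)) := by
        apply Finset.sum_congr rfl
        intro s hs
        rw [Finset.mem_range] at hs
        rw [if_neg hij, if_pos rfl]
        split_ifs <;> omega
      rw [this, Finset.sum_add_distrib, sum_range_ite, sum_range_ite]
      omega
    have hfj : (∑ s : Fin (μ j), if p ≤ Lf k μ i j ⟨j, s⟩ then (1:ℕ) else 0) =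
        min (μ j) (μ i + 1 - p) := by
      rw [hrow j]
      have : ∑ s ∈ Finset.range (μ j),
          (if p ≤ (if j = j then μ i - s else if j = i then
              (if s + 2 ≤ μ j then μ j - 2 - s else μ i - 1 - s) else μ j - 1 - s)
            then (1:ℕ) else 0) =
          ∑ s ∈ Finset.range (μ j), (if 0 ≤ s ∧ s < μ i + 1 - p then (1:ℕ) else 0) := by
        apply Finset.sum_congr rfl
        intro s hs
        rw [Finset.mem_range] at hs
        rw [if_pos rfl]
        exact if_congr (by omega) rfl rfl
      rw [this, sum_range_ite]
      omega
    rw [hfi, hfj, lam, if_pos rfl, lam, if_neg (Ne.symm hij), if_pos rfl]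
    omega

end Final

/-- `e₂` is nilpotent of Jordan type `λ`:
`rank(e₂^p) = Σ_r max(λ_r − p, 0)` for all `p ≥ 0`. -/
theorem stmt7
    (k : ℕ) (n : ℕ) (μ : Fin k → ℕ)
    (hpos : ∀ r, 0 < μ r) (hanti : Antitone μ)
    (hn : ∑ r : Fin k, μ r = n)
    (i j : Fin k) (hij : i < j)
    (hi : ∀ r, r < i → μ i < μ r)
    (hj : ∀ r, j < r → μ r < μ j)
    (hcase : (j : ℕ) = (i : ℕ) + 1 ∨ μ i = μ j)
    (p : ℕ) :
    ((e2 k μ i j) ^ p).rank = ∑ r : Fin k, (lam k μ i j r - p) := by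
  have hne : i ≠ j := ne_of_lt hij
  have hji : μ j ≤ μ i := hanti (le_of_lt hij)
  have hpj : 0 < μ j := hpos j
  rw [rank_e2_pow k μ i j hne hji hpj p, count_L k μ i j hne hji hpj p]
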